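/- Define X₀ = α and X_{j+1} = Id ⋆ X_j for j ≥ 0. Then for all i < j, X_j = X_i ∘ X_{j+1} ∘ X_i⁻¹; equivalently X_i⁻¹ ∘ X_j ∘ X_i = X_{j+1}, i.e. the X_j satisfy the defining relations of Thompson's group F. -/

import Mathlib

/-- The associator: α(2m)=4m, α(4m+1)=4m+2, α(4m+3)=2m+1. -/
def alphaFun (n : ℕ) : ℕ :=
  if n % 2 = 0 then 2 * n else if n % 4 = 1 then n + 1 else (n - 1) / 2

/-- The claimed inverse of the associator: β(4m)=2m, β(4m+2)=4m+1, β(2m+1)=4m+3. -/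
def betaFun (n : ℕ) : ℕ :=
  if n % 4 = 0 then n / 2 else if n % 4 = 2 then n - 1 else 2 * n + 1

/-- The associator as a permutation of ℕ. -/
def alphaE : Equiv.Perm ℕ where
  toFun := alphaFun
  invFun := betaFun
  left_inv := by intro n; unfold alphaFun betaFun; split_ifs <;> omega
  right_inv := by intro n; unfold alphaFun betaFun; split_ifs <;> omega

/-- Girard's conjunction: (a⋆b)(2m)=2a(m), (a⋆b)(2m+1)=2b(m)+1. -/
def starFun (a b : ℕ → ℕ) (n : ℕ) : ℕ :=
  if n % 2 = 0 then 2 * a (n / 2) else 2 * b (n / 2) + 1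

/-- Girard's conjunction on permutations of ℕ. -/
def starE (a b : Equiv.Perm ℕ) : Equiv.Perm ℕ where
  toFun := starFun a b
  invFun := starFun a.symm b.symm
  left_inv := by
    intro n; unfold starFun
    by_cases h : n % 2 = 0
    · rw [if_pos h, if_pos (by omega), Nat.mul_div_cancel_left _ (by norm_num),
        Equiv.symm_apply_apply]; omega
    · rw [if_neg h, if_neg (by omega),
        show (2 * (b (n / 2)) + 1) / 2 = b (n / 2) by omega, Equiv.symm_apply_apply]; omega
  right_inv := by
    intro n; unfold starFun
    by_cases h : n % 2 = 0
    · rw [if_pos h, if_pos (by omega), Nat.mul_div_cancel_left _ (by norm_num),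
        Equiv.apply_symm_apply]; omega
    · rw [if_neg h, if_neg (by omega),
        show (2 * (b.symm (n / 2)) + 1) / 2 = b.symm (n / 2) by omega,
        Equiv.apply_symm_apply]; omega

/-- X₀ = α, X_{j+1} = Id ⋆ X_j. -/
def X : ℕ → Equiv.Perm ℕ
  | 0 => alphaE
  | j + 1 => starE (Equiv.refl ℕ) (X j)


lemma starE_mul (a b : Equiv.Perm ℕ) :
    starE (Equiv.refl ℕ) a * starE (Equiv.refl ℕ) b = starE (Equiv.refl ℕ) (a * b) := by
  ext n
  simp only [Equiv.Perm.mul_apply, starE, Equiv.coe_fn_mk]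
  unfold starFun
  simp only [Equiv.refl_apply]
  by_cases h : n % 2 = 0
  · simp only [if_pos h]; rw [if_pos (by omega)]; omega
  · simp only [if_neg h]; rw [if_neg (by omega),
      show (2 * (b (n / 2)) + 1) / 2 = b (n / 2) by omega, Equiv.Perm.mul_apply]

lemma starE_one : starE (Equiv.refl ℕ) 1 = 1 := by
  ext n
  simp only [starE, Equiv.coe_fn_mk, Equiv.Perm.coe_one, id_eq]
  unfold starFun
  simp only [Equiv.refl_apply, Equiv.Perm.coe_one, id_eq]
  split_ifs <;> omega

lemma starE_inv (a : Equiv.Perm ℕ) :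
    (starE (Equiv.refl ℕ) a)⁻¹ = starE (Equiv.refl ℕ) a⁻¹ := by
  symm
  rw [eq_inv_iff_mul_eq_one, starE_mul, inv_mul_cancel, starE_one]

lemma key (f : Equiv.Perm ℕ) :
    alphaE * starE (Equiv.refl ℕ) (starE (Equiv.refl ℕ) f) = starE (Equiv.refl ℕ) f * alphaE := by
  ext n
  simp only [Equiv.Perm.mul_apply, starE, alphaE, Equiv.coe_fn_mk, Equiv.refl_apply]
  unfold starFun alphaFun
  simp only [Equiv.refl_apply]
  by_cases h2 : n % 2 = 0
  · split_ifs <;> omega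
  · by_cases h4 : n % 4 = 1
    · split_ifs <;> omega
    · have h1 : (n - 1) / 2 / 2 = n / 2 / 2 := by omega
      split_ifs <;> simp only [h1] <;> omega

lemma X_succ (j : ℕ) : X (j + 1) = starE (Equiv.refl ℕ) (X j) := rfl

lemma rel1 : ∀ i j : ℕ, i < j → X j = X i * X (j + 1) * (X i)⁻¹ := by
  intro i
  induction i with
  | zero =>
    intro j hj
    obtain ⟨k, rfl⟩ : ∃ k, j = k + 1 := ⟨j - 1, by omega⟩
    have hk := key (X k)
    show X (k + 1) = X 0 * X (k + 2) * (X 0)⁻¹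
    rw [show X 0 = alphaE from rfl, X_succ, show X (k + 2) = starE (Equiv.refl ℕ) (starE (Equiv.refl ℕ) (X k)) from rfl]
    rw [hk]
    group
  | succ i ih =>
    intro j hj
    obtain ⟨k, rfl⟩ : ∃ k, j = k + 1 := ⟨j - 1, by omega⟩
    have h' := ih k (by omega)
    rw [X_succ k, h', X_succ (k + 1), X_succ i, starE_inv (X i), ← starE_mul, ← starE_mul]

theorem thompson_relations :
    ∀ i j : ℕ, i < j → X j = X i * X (j + 1) * (X i)⁻¹ ∧ (X i)⁻¹ * X j * X i = X (j + 1) := by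
  intro i j h
  have h1 := rel1 i j h
  refine ⟨h1, ?_⟩
  rw [h1]
  group
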